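/- If a matrix M on ℂ^n commutes with an invertible antilinear map, then M is pseudo-Hermitian: there exists a Hermitian invertible matrix η with M† = η M η⁻¹. -/

import Mathlib

open Matrix

open Polynomial

noncomputable section AuxTranspose

/-- A "good form" on a `ℂ[X]`-module `W`. -/
def HasGoodForm (W : Type) [AddCommGroup W] [Module ℂ[X] W] [Module ℂ W]
    [IsScalarTower ℂ ℂ[X] W] : Prop :=
  ∃ B : W →ₗ[ℂ] W →ₗ[ℂ] ℂ,
    (∀ a b, B a b = B b a) ∧
    (∀ a b, B ((X : ℂ[X]) • a) b = B a ((X : ℂ[X]) • b)) ∧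
    (∀ a, a ≠ 0 → ∃ b, B a b ≠ 0)

lemma hasGoodForm_of_equiv (W W' : Type) [AddCommGroup W] [Module ℂ[X] W] [Module ℂ W]
    [IsScalarTower ℂ ℂ[X] W] [AddCommGroup W'] [Module ℂ[X] W'] [Module ℂ W']
    [IsScalarTower ℂ ℂ[X] W'] (e : W ≃ₗ[ℂ[X]] W') (h : HasGoodForm W') : HasGoodForm W := by
  obtain ⟨B, hsymm, hbal, hsep⟩ := h
  let e' := e.restrictScalars ℂ
  have hsm : ∀ w : W, e' ((X : ℂ[X]) • w) = (X : ℂ[X]) • e' w := fun w => e.map_smul X w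
  refine ⟨(B.compl₁₂ e'.toLinearMap e'.toLinearMap), fun a b => hsymm _ _, fun a b => ?_, ?_⟩
  · simp only [LinearMap.compl₁₂_apply, LinearEquiv.coe_coe, hsm]
    exact hbal _ _
  · intro a ha
    obtain ⟨b, hb⟩ := hsep (e' a) (by simpa using ha)
    exact ⟨e'.symm b, by simpa using hb⟩

lemma hasGoodForm_quot_monic (m : ℂ[X]) (hm : m.Monic) :
    HasGoodForm (ℂ[X] ⧸ (ℂ[X] ∙ m)) := by
  set W := ℂ[X] ⧸ (ℂ[X] ∙ m)
  set d := m.natDegree with hd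
  let mh : W →ₗ[ℂ] ℂ[X] := AdjoinRoot.modByMonicHom hm
  let wmk : ℂ[X] → W := AdjoinRoot.mk m
  have hsurj : ∀ x : W, ∃ f, wmk f = x := fun x => AdjoinRoot.mk_surjective x
  have hmk : ∀ x : W, wmk (mh x) = x := fun x => AdjoinRoot.mk_leftInverse hm x
  have hrep : ∀ (f : ℂ[X]), mh (wmk f) = f %ₘ m := fun f => AdjoinRoot.modByMonicHom_mk hm f
  have hX : ∀ h : ℂ[X], (X : ℂ[X]) • wmk h = wmk (X * h) := by
    intro h
    have h2 := Submodule.Quotient.mk_smul (ℂ[X] ∙ m) (X : ℂ[X]) h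
    rw [smul_eq_mul] at h2
    exact h2.symm
  -- congruence: the product mod m only depends on the classes
  have hcong : ∀ (f g : ℂ[X]), (mh (wmk f) * mh (wmk g)) %ₘ m = (f * g) %ₘ m := by
    intro f g
    rw [hrep f, hrep g]
    conv_rhs => rw [← modByMonic_add_div f m, ← modByMonic_add_div g m]
    have h0 : ∀ c : ℂ[X], (m * c) %ₘ m = 0 := fun c => self_mul_modByMonic hm
    rw [show (f %ₘ m + m * (f /ₘ m)) * (g %ₘ m + m * (g /ₘ m))
        = f %ₘ m * (g %ₘ m) + m * ((f /ₘ m) * (g %ₘ m) + (f %ₘ m) * (g /ₘ m)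
            + m * ((f /ₘ m) * (g /ₘ m))) by ring]
    rw [add_modByMonic, h0, add_zero]
  -- the bilinear form
  let Bfun : W → W → ℂ := fun a b => ((mh a * mh b) %ₘ m).coeff (d - 1)
  have hBadd₁ : ∀ a a' b, Bfun (a + a') b = Bfun a b + Bfun a' b := by
    intro a a' b
    simp only [Bfun, map_add, add_mul, add_modByMonic, coeff_add]
  have hBsmul₁ : ∀ (c : ℂ) a b, Bfun (c • a) b = c • Bfun a b := by
    intro c a b
    simp only [Bfun, mh.map_smul, smul_mul_assoc, smul_modByMonic, coeff_smul]
  have hBcomm : ∀ a b, Bfun a b = Bfun b a := by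
    intro a b; simp only [Bfun, mul_comm]
  let B : W →ₗ[ℂ] W →ₗ[ℂ] ℂ := LinearMap.mk₂ ℂ Bfun hBadd₁ hBsmul₁
    (fun a b b' => by rw [hBcomm, hBadd₁, hBcomm b, hBcomm b'])
    (fun c a b => by rw [hBcomm, hBsmul₁, hBcomm])
  refine ⟨B, hBcomm, ?_, ?_⟩
  · -- balance
    intro a b
    obtain ⟨f, rfl⟩ := hsurj a
    obtain ⟨g, rfl⟩ := hsurj b
    show Bfun ((X : ℂ[X]) • wmk f) (wmk g) = Bfun (wmk f) ((X : ℂ[X]) • wmk g)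
    rw [hX, hX]
    show ((mh (wmk (X * f)) * mh (wmk g)) %ₘ m).coeff (d-1)
        = ((mh (wmk f) * mh (wmk (X * g))) %ₘ m).coeff (d-1)
    rw [hcong, hcong, show X * f * g = f * (X * g) by ring]
  · -- separation
    intro a ha
    have hg0 : mh a ≠ 0 := fun h => by
      have h2 := hmk a; rw [h] at h2
      exact ha (by rw [← h2]; exact map_zero (AdjoinRoot.mk m))
    obtain ⟨f, rfl⟩ := hsurj a
    have hdeg : (mh (wmk f)).degree < m.degree := by
      rw [hrep f]; exact degree_modByMonic_lt f hm
    set g := mh (wmk f) with hgdef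
    have he : g.natDegree < d := natDegree_lt_natDegree hg0 hdeg
    have he' : g.natDegree ≤ d - 1 := Nat.le_sub_one_of_lt he
    set k := d - 1 - g.natDegree with hk
    refine ⟨wmk (X ^ k), ?_⟩
    show ((mh (wmk f) * mh (wmk (X ^ k))) %ₘ m).coeff (d-1) ≠ 0
    have hmkg : wmk g = wmk f := hmk _
    rw [show mh (wmk f) * mh (wmk (X ^ k))
        = mh (wmk g) * mh (wmk (X ^ k)) by rw [hmkg]]
    rw [hcong]
    have hdeglt : (g * X ^ k).degree < m.degree := by
      rw [degree_mul, degree_X_pow, degree_eq_natDegree hg0]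
      rw [degree_eq_natDegree hm.ne_zero, ← hd, ← Nat.cast_add]
      exact_mod_cast show g.natDegree + k < d by omega
    rw [(modByMonic_eq_self_iff hm).2 hdeglt]
    rw [show d - 1 = g.natDegree + k by omega, coeff_mul_X_pow]
    exact mt leadingCoeff_eq_zero.mp hg0


lemma hasGoodForm_quot_span (q : ℂ[X]) (hq : q ≠ 0) :
    HasGoodForm (ℂ[X] ⧸ (ℂ[X] ∙ q)) := by
  set m := q * Polynomial.C q.leadingCoeff⁻¹ with hmdef
  have hm : m.Monic := monic_mul_leadingCoeff_inv hq
  have hspan : (ℂ[X] ∙ q) = (ℂ[X] ∙ m) := by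
    apply le_antisymm
    · rw [Submodule.span_singleton_le_iff_mem, Submodule.mem_span_singleton]
      refine ⟨Polynomial.C q.leadingCoeff, ?_⟩
      rw [smul_eq_mul, hmdef, show Polynomial.C q.leadingCoeff * (q * Polynomial.C q.leadingCoeff⁻¹)
          = q * (Polynomial.C q.leadingCoeff * Polynomial.C q.leadingCoeff⁻¹) by ring,
        ← Polynomial.C_mul, mul_inv_cancel₀ (leadingCoeff_ne_zero.mpr hq), Polynomial.C_1, mul_one]
    · rw [Submodule.span_singleton_le_iff_mem, Submodule.mem_span_singleton]
      exact ⟨Polynomial.C q.leadingCoeff⁻¹, by rw [smul_eq_mul]; ring⟩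
  exact hasGoodForm_of_equiv _ _ (Submodule.quotEquivOfEq _ _ hspan)
    (hasGoodForm_quot_monic m hm)

lemma hasGoodForm_pi (ι : Type) [Fintype ι] (W : ι → Type) [∀ i, AddCommGroup (W i)]
    [∀ i, Module ℂ[X] (W i)] [∀ i, Module ℂ (W i)] [∀ i, IsScalarTower ℂ ℂ[X] (W i)]
    (h : ∀ i, HasGoodForm (W i)) : HasGoodForm (∀ i, W i) := by
  choose B hsymm hbal hsep using h
  classical
  let P : (∀ i, W i) →ₗ[ℂ] (∀ i, W i) →ₗ[ℂ] ℂ :=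
    ∑ i : ι, (B i).compl₁₂ (LinearMap.proj i) (LinearMap.proj i)
  have hPapp : ∀ x y, P x y = ∑ i : ι, B i (x i) (y i) := by
    intro x y
    simp [P, LinearMap.sum_apply, LinearMap.compl₁₂_apply]
  refine ⟨P, ?_, ?_, ?_⟩
  · intro a b; rw [hPapp, hPapp]; exact Finset.sum_congr rfl fun i _ => hsymm i _ _
  · intro a b; rw [hPapp, hPapp]
    refine Finset.sum_congr rfl fun i _ => ?_
    have : ((X : ℂ[X]) • a) i = (X : ℂ[X]) • a i := rfl
    rw [this, show ((X : ℂ[X]) • b) i = (X : ℂ[X]) • b i from rfl]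
    exact hbal i _ _
  · intro a ha
    have : ∃ i, a i ≠ 0 := by
      by_contra hcon
      push_neg at hcon
      exact ha (funext hcon)
    obtain ⟨i, hi⟩ := this
    obtain ⟨b, hb⟩ := hsep i (a i) hi
    refine ⟨Pi.single i b, ?_⟩
    rw [hPapp]
    rw [Finset.sum_eq_single i]
    · rwa [Pi.single_eq_same]
    · intro j _ hj
      rw [Pi.single_eq_of_ne hj, map_zero]
    · intro hmem; exact absurd (Finset.mem_univ i) hmem


/-- Every complex square matrix `N` admits an invertible `G` with `Nᵀ G = G N`. -/
lemma exists_transpose_intertwiner (n : ℕ) (N : Matrix (Fin n) (Fin n) ℂ) :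
    ∃ G : Matrix (Fin n) (Fin n) ℂ, IsUnit G ∧ Nᵀ * G = G * N := by
  classical
  set f : (Fin n → ℂ) →ₗ[ℂ] (Fin n → ℂ) := Matrix.toLin' N with hf
  -- the ℂ[X]-module structure on ℂ^n induced by N
  have htors : Module.IsTorsion ℂ[X] (Module.AEval' f) := by
    intro x
    refine ⟨⟨f.charpoly, mem_nonZeroDivisors_of_ne_zero f.charpoly_monic.ne_zero⟩, ?_⟩
    show (LinearMap.charpoly f) • x = 0
    apply (Module.AEval.of ℂ (Fin n → ℂ) f).symm.injective
    rw [Module.AEval.of_symm_smul, map_zero, f.aeval_self_charpoly, zero_smul]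
  obtain ⟨ι, hfin, p, hp, e, ⟨equiv⟩⟩ := Module.equiv_directSum_of_isTorsion htors
  have hgood : HasGoodForm (Module.AEval' f) := by
    refine hasGoodForm_of_equiv _ _
      (equiv.trans (DirectSum.linearEquivFunOnFintype ℂ[X] ι _)) ?_
    exact hasGoodForm_pi ι _ fun i => hasGoodForm_quot_span _ (pow_ne_zero _ (hp i).ne_zero)
  obtain ⟨B, hsymm, hbal, hsep⟩ := hgood
  -- transport to a bilinear form on ℂ^n
  let of := Module.AEval'.of f
  let B' : (Fin n → ℂ) →ₗ[ℂ] (Fin n → ℂ) →ₗ[ℂ] ℂ :=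
    B.compl₁₂ (of.restrictScalars ℂ).toLinearMap (of.restrictScalars ℂ).toLinearMap
  have hB'app : ∀ x y, B' x y = B (of x) (of y) := fun x y => rfl
  have hB'symm : ∀ x y, B' x y = B' y x := fun x y => hsymm _ _
  have hB'bal : ∀ x y, B' (f x) y = B' x (f y) := by
    intro x y
    rw [hB'app, hB'app, ← Module.AEval'.X_smul_of, ← Module.AEval'.X_smul_of]
    exact hbal _ _
  have hB'sep : ∀ x, x ≠ 0 → ∃ y, B' x y ≠ 0 := by
    intro x hx
    obtain ⟨b, hb⟩ := hsep (of x) (by simpa using hx)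
    exact ⟨of.symm b, by rw [hB'app]; simpa using hb⟩
  set G := LinearMap.toMatrix₂' ℂ B' with hG
  have hB'eq : ∀ x y, B' x y = ∑ i, ∑ j, x i * G i j * y j := by
    intro x y
    conv_lhs => rw [← Matrix.toLinearMap₂'_toMatrix' (R := ℂ) B']
    rw [Matrix.toLinearMap₂'_apply, ← hG]
    exact Finset.sum_congr rfl fun i _ => Finset.sum_congr rfl fun j _ => by
      simp only [smul_eq_mul]; ring
  -- intertwining
  have hint : Nᵀ * G = G * N := by
    have h1 : B'.compl₁₂ f LinearMap.id = B'.compl₁₂ LinearMap.id f := by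
      apply LinearMap.ext; intro x; apply LinearMap.ext; intro y
      simpa using hB'bal x y
    have h2 := congrArg (LinearMap.toMatrix₂' ℂ) h1
    rw [LinearMap.toMatrix₂'_compl₁₂ B' f LinearMap.id,
      LinearMap.toMatrix₂'_compl₁₂ B' LinearMap.id f, ← hG,
      LinearMap.toMatrix'_id, hf, LinearMap.toMatrix'_toLin'] at h2
    simpa using h2
  refine ⟨G, ?_, hint⟩
  -- invertibility
  rw [Matrix.isUnit_iff_isUnit_det, isUnit_iff_ne_zero]
  intro hdet
  obtain ⟨v, hv0, hv⟩ := (Matrix.exists_mulVec_eq_zero_iff).2 hdet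
  obtain ⟨y, hy⟩ := hB'sep v hv0
  apply hy
  rw [hB'symm, hB'eq]
  have : ∀ i, ∑ j, y i * G i j * v j = y i * (G.mulVec v) i := by
    intro i
    rw [Matrix.mulVec, dotProduct, Finset.mul_sum]
    exact Finset.sum_congr rfl fun j _ => by ring
  rw [Finset.sum_congr rfl fun i _ => this i]
  simp [hv]

end AuxTranspose

/-- If a matrix `M` on `ℂ^n` commutes with an invertible antilinear map `Θ`,
then `M` is pseudo-Hermitian: there is a Hermitian invertible `η` with `Mᴴ = η M η⁻¹`. -/
theorem pseudoHermitian_of_antilinear_symmetry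
    (n : ℕ) (M : Matrix (Fin n) (Fin n) ℂ)
    (Θ : (Fin n → ℂ) → (Fin n → ℂ))
    (hbij : Function.Bijective Θ)
    (hadd : ∀ v w : Fin n → ℂ, Θ (v + w) = Θ v + Θ w)
    (hsmul : ∀ (a : ℂ) (v : Fin n → ℂ), Θ (a • v) = (starRingEnd ℂ a) • Θ v)
    (hcomm : ∀ v : Fin n → ℂ, M.mulVec (Θ v) = Θ (M.mulVec v)) :
    ∃ η : Matrix (Fin n) (Fin n) ℂ, η.IsHermitian ∧ IsUnit η ∧ Mᴴ = η * M * η⁻¹ := by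
  classical
  -- Step 1: the linear map v ↦ star (Θ v) and its matrix A
  let Tl : (Fin n → ℂ) →ₗ[ℂ] (Fin n → ℂ) :=
    { toFun := fun v => star (Θ v)
      map_add' := fun v w => by
        show star (Θ (v + w)) = star (Θ v) + star (Θ w)
        rw [hadd]; exact star_add _ _
      map_smul' := fun a v => by
        show star (Θ (a • v)) = a • star (Θ v)
        rw [hsmul]
        show star ((star a) • Θ v) = a • star (Θ v)
        rw [star_smul, star_star] }
  set A := LinearMap.toMatrix' Tl with hA
  have hTA : ∀ v, A.mulVec v = star (Θ v) := by
    intro v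
    rw [hA, ← Matrix.toLin'_apply, Matrix.toLin'_toMatrix']
    rfl
  -- matrix extensionality via mulVec
  have hmatext : ∀ (P Q : Matrix (Fin n) (Fin n) ℂ), (∀ v, P.mulVec v = Q.mulVec v) → P = Q := by
    intro P Q h
    ext i j
    have := congrFun (h (Pi.single j 1)) i
    simpa [Matrix.mulVec_single] using this
  -- A is invertible
  have hAunit : IsUnit A := by
    have hTbij : Function.Bijective Tl :=
      (Function.Involutive.bijective (star_involutive)).comp hbij
    let Eq := LinearEquiv.ofBijective Tl hTbij
    have h1 : Tl ∘ₗ (Eq.symm : (Fin n → ℂ) →ₗ[ℂ] (Fin n → ℂ)) = LinearMap.id := by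
      apply LinearMap.ext; intro x
      exact Eq.apply_symm_apply x
    have h2 : A * LinearMap.toMatrix' (Eq.symm : (Fin n → ℂ) →ₗ[ℂ] (Fin n → ℂ)) = 1 := by
      rw [hA, ← LinearMap.toMatrix'_comp, h1, LinearMap.toMatrix'_id]
    rw [Matrix.isUnit_iff_isUnit_det]
    refine IsUnit.of_mul_eq_one (LinearMap.toMatrix' (Eq.symm :
      (Fin n → ℂ) →ₗ[ℂ] (Fin n → ℂ))).det ?_
    rw [← Matrix.det_mul, h2, Matrix.det_one]
  -- Step 2: the intertwining relation (M.map star) * A = A * M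
  have hkey : ∀ u : Fin n → ℂ, star (M.mulVec (star u)) = (M.map star).mulVec u := by
    intro u
    funext i
    simp only [Matrix.mulVec, dotProduct, Matrix.map_apply, Pi.star_apply, star_sum,
      star_mul', star_star]
  have hNA : (M.map star) * A = A * M := by
    apply hmatext
    intro v
    rw [← Matrix.mulVec_mulVec, ← Matrix.mulVec_mulVec, ← hkey (A.mulVec v)]
    rw [hTA v, star_star, hcomm v, ← hTA (M.mulVec v)]
  -- Step 3: intertwiner for the transpose of M.map star
  obtain ⟨G, hGu, hGint⟩ := exists_transpose_intertwiner n (M.map star)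
  have hNT : (M.map star)ᵀ = Mᴴ := by
    ext i j
    simp [Matrix.conjTranspose_apply, Matrix.transpose_apply, Matrix.map_apply]
  obtain ⟨S, hSdef⟩ : ∃ S, S = G * A := ⟨_, rfl⟩
  have hSu : IsUnit S := hSdef ▸ hGu.mul hAunit
  have hMS : Mᴴ * S = S * M := by
    rw [hSdef, ← mul_assoc, ← hNT, hGint, mul_assoc, hNA, ← mul_assoc]
  have hMSH : Mᴴ * Sᴴ = Sᴴ * M := by
    have h := congrArg Matrix.conjTranspose hMS
    rw [Matrix.conjTranspose_mul, Matrix.conjTranspose_mul, Matrix.conjTranspose_conjTranspose]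
      at h
    exact h.symm
  -- Step 4: find a real t making the Hermitian combination invertible
  set Q : Matrix (Fin n) (Fin n) ℂ[X] :=
    Matrix.of fun i j => (X + C Complex.I) * C (S i j) + (X - C Complex.I) * C (Sᴴ i j) with hQ
  set P : ℂ[X] := Q.det with hP
  have hPeval : ∀ z : ℂ, P.eval z
      = Matrix.det ((z + Complex.I) • S + (z - Complex.I) • Sᴴ) := by
    intro z
    rw [hP, show Polynomial.eval z = (Polynomial.evalRingHom z : ℂ[X] → ℂ) from rfl,
      RingHom.map_det]
    congr 1
    ext i j
    simp [hQ, Matrix.map_apply, mul_comm]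
  have hPne : P ≠ 0 := by
    intro h0
    have h1 := hPeval Complex.I
    rw [h0] at h1
    simp only [eval_zero, sub_self, zero_smul, add_zero] at h1
    rw [Matrix.det_smul, Fintype.card_fin] at h1
    have : IsUnit S.det := (Matrix.isUnit_iff_isUnit_det S).mp hSu
    rw [isUnit_iff_ne_zero] at this
    have h2 : (Complex.I + Complex.I) ^ n ≠ 0 := by
      apply pow_ne_zero
      simp [Complex.I_ne_zero, ← two_mul]
    exact (mul_ne_zero h2 this) h1.symm
  have hfin : Set.Finite {z : ℂ | P.IsRoot z} := Polynomial.finite_setOf_isRoot hPne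
  have hinf : Set.Infinite (Set.range (fun t : ℝ => (t : ℂ))) :=
    Set.infinite_range_of_injective Complex.ofReal_injective
  obtain ⟨z, hzmem, hznot⟩ := (hinf.diff hfin).nonempty
  obtain ⟨t, rfl⟩ := hzmem
  have hdet : Matrix.det (((t : ℂ) + Complex.I) • S + ((t : ℂ) - Complex.I) • Sᴴ) ≠ 0 := by
    rw [← hPeval]
    exact hznot
  set η := ((t : ℂ) + Complex.I) • S + ((t : ℂ) - Complex.I) • Sᴴ with hη
  have hηdet : IsUnit η.det := by rwa [isUnit_iff_ne_zero]
  have hηunit : IsUnit η := (Matrix.isUnit_iff_isUnit_det η).mpr hηdet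
  have hherm : η.IsHermitian := by
    show ηᴴ = η
    rw [hη, Matrix.conjTranspose_add, Matrix.conjTranspose_smul, Matrix.conjTranspose_smul,
      Matrix.conjTranspose_conjTranspose]
    have h1 : star ((t : ℂ) + Complex.I) = (t : ℂ) - Complex.I := by
      simp [Complex.ext_iff]
    have h2 : star ((t : ℂ) - Complex.I) = (t : ℂ) + Complex.I := by
      simp [Complex.ext_iff]
    rw [h1, h2, add_comm]
  have hint : Mᴴ * η = η * M := by
    rw [hη, mul_add, add_mul, Matrix.mul_smul, Matrix.mul_smul, Matrix.smul_mul,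
      Matrix.smul_mul, hMS, hMSH]
  refine ⟨η, hherm, hηunit, ?_⟩
  calc Mᴴ = Mᴴ * (η * η⁻¹) := by rw [Matrix.mul_nonsing_inv η hηdet, mul_one]
    _ = (Mᴴ * η) * η⁻¹ := by rw [mul_assoc]
    _ = η * M * η⁻¹ := by rw [hint]
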